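/- Let |𝒯| < |𝒴| and |𝒳| ≥ 2, and suppose min_{Q∈Δ_P} I_Q(T:X|Y) = 0. If there exists a maximizer of H_Q(T|X,Y) over Δ_P with full support, then the maximizer is not unique. -/

import Mathlib

open scoped BigOperators
noncomputable section

variable {T X Y : Type*}

/-- A joint probability distribution of `(T,X,Y)`, as a function `T → X → Y → ℝ`. -/
def IsDist [Fintype T] [Fintype X] [Fintype Y] (P : T → X → Y → ℝ) : Prop :=
  (∀ t x y, 0 ≤ P t x y) ∧ ∑ t, ∑ x, ∑ y, P t x y = 1

/-- The `(T,X)`-marginal. -/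
def margTX [Fintype Y] (P : T → X → Y → ℝ) (t : T) (x : X) : ℝ := ∑ y, P t x y

/-- The `(T,Y)`-marginal. -/
def margTY [Fintype X] (P : T → X → Y → ℝ) (t : T) (y : Y) : ℝ := ∑ x, P t x y

/-- The `(X,Y)`-marginal. -/
def margXY [Fintype T] (P : T → X → Y → ℝ) (x : X) (y : Y) : ℝ := ∑ t, P t x y

/-- The `T`-marginal. -/
def margT [Fintype X] [Fintype Y] (P : T → X → Y → ℝ) (t : T) : ℝ := ∑ x, ∑ y, P t x y

/-- The `Y`-marginal. -/
def margY [Fintype T] [Fintype X] (P : T → X → Y → ℝ) (y : Y) : ℝ := ∑ t, ∑ x, P t x y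

/-- `Δ_P`: the polytope of joint distributions with the same `(T,X)`- and
`(T,Y)`-marginals as `P`. -/
def deltaP [Fintype T] [Fintype X] [Fintype Y] (P : T → X → Y → ℝ) :
    Set (T → X → Y → ℝ) :=
  {Q | IsDist Q ∧ (∀ t x, margTX Q t x = margTX P t x) ∧
    (∀ t y, margTY Q t y = margTY P t y)}

/-- The conditional entropy `H_Q(T|X,Y)` (with the convention `0 log 0 = 0`,
automatic since `Real.log 0 = 0`). -/
def condEntTXY [Fintype T] [Fintype X] [Fintype Y] (Q : T → X → Y → ℝ) : ℝ :=
  ∑ t, ∑ x, ∑ y, -(Q t x y * Real.log (Q t x y / margXY Q x y))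

/-- The conditional mutual information `I_Q(T:X|Y)`. -/
def CMI [Fintype T] [Fintype X] [Fintype Y] (Q : T → X → Y → ℝ) : ℝ :=
  ∑ t, ∑ x, ∑ y,
    Q t x y * Real.log (Q t x y * margY Q y / (margTY Q t y * margXY Q x y))

section Aux
variable [Fintype T] [Fintype X] [Fintype Y]

lemma margY_eq_sum_margTY (Q : T → X → Y → ℝ) (y : Y) :
    margY Q y = ∑ t, margTY Q t y := by
  simp [margY, margTY]

lemma margY_eq_sum_margXY (Q : T → X → Y → ℝ) (y : Y) :
    margY Q y = ∑ x, margXY Q x y := by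
  simp only [margY, margXY]
  exact Finset.sum_comm

lemma sum_margY (Q : T → X → Y → ℝ) (h2 : ∑ t, ∑ x, ∑ y, Q t x y = 1) :
    ∑ y, margY Q y = 1 := by
  calc ∑ y, margY Q y = ∑ t, ∑ y, ∑ x, Q t x y := Finset.sum_comm
    _ = ∑ t, ∑ x, ∑ y, Q t x y := Finset.sum_congr rfl (fun t _ => Finset.sum_comm)
    _ = 1 := h2

lemma condEnt_add_CMI (Q : T → X → Y → ℝ) (h0 : ∀ t x y, 0 ≤ Q t x y) :
    condEntTXY Q + CMI Q
      = ∑ t, ∑ y, margTY Q t y * (Real.log (margY Q y) - Real.log (margTY Q t y)) := by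
  rw [condEntTXY, CMI, ← Finset.sum_add_distrib]
  refine Finset.sum_congr rfl fun t _ => ?_
  rw [← Finset.sum_add_distrib]
  rw [show (∑ x, (∑ y, -(Q t x y * Real.log (Q t x y / margXY Q x y)) +
      ∑ y, Q t x y * Real.log (Q t x y * margY Q y / (margTY Q t y * margXY Q x y))))
    = ∑ x, ∑ y, (-(Q t x y * Real.log (Q t x y / margXY Q x y)) +
      Q t x y * Real.log (Q t x y * margY Q y / (margTY Q t y * margXY Q x y))) from
    Finset.sum_congr rfl fun x _ => (Finset.sum_add_distrib).symm]
  rw [Finset.sum_comm]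
  refine Finset.sum_congr rfl fun y _ => ?_
  rw [show margTY Q t y * (Real.log (margY Q y) - Real.log (margTY Q t y))
      = ∑ x, Q t x y * (Real.log (margY Q y) - Real.log (margTY Q t y)) from by
    rw [margTY, Finset.sum_mul]]
  refine Finset.sum_congr rfl fun x _ => ?_
  rcases eq_or_lt_of_le (h0 t x y) with hq | hq
  · simp [← hq]
  · have hxy : 0 < margXY Q x y :=
      Finset.sum_pos' (fun t' _ => h0 t' x y) ⟨t, Finset.mem_univ t, hq⟩
    have hty : 0 < margTY Q t y :=
      Finset.sum_pos' (fun x' _ => h0 t x' y) ⟨x, Finset.mem_univ x, hq⟩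
    have hy : 0 < margY Q y := by
      rw [margY_eq_sum_margTY]
      exact Finset.sum_pos' (fun t' _ => Finset.sum_nonneg fun x' _ => h0 t' x' y)
        ⟨t, Finset.mem_univ t, hty⟩
    rw [Real.log_div hq.ne' hxy.ne',
      Real.log_div (mul_pos hq hy).ne' (mul_pos hty hxy).ne',
      Real.log_mul hq.ne' hy.ne', Real.log_mul hty.ne' hxy.ne']
    ring

lemma exists_kernel_vec {T' Y' : Type*} [Fintype T'] [Fintype Y']
    (hcard : Fintype.card T' < Fintype.card Y') (w : T' → Y' → ℝ) :
    ∃ d : Y' → ℝ, d ≠ 0 ∧ ∀ t, ∑ y, w t y * d y = 0 := by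
  let φ : (Y' → ℝ) →ₗ[ℝ] (T' → ℝ) :=
    { toFun := fun d t => ∑ y, w t y * d y
      map_add' := fun d e => funext fun t => by
        simp [mul_add, Finset.sum_add_distrib]
      map_smul' := fun cc d => funext fun t => by
        simp [Finset.mul_sum, mul_left_comm] }
  have hni : ¬ Function.Injective φ := fun h => by
    have h2 := LinearMap.finrank_le_finrank_of_injective h
    rw [Module.finrank_fintype_fun_eq_card, Module.finrank_fintype_fun_eq_card] at h2
    omega
  rw [Function.not_injective_iff] at hni
  obtain ⟨d1, d2, heq, hne⟩ := hni
  refine ⟨d1 - d2, sub_ne_zero.2 hne, fun t => ?_⟩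
  have hz : φ (d1 - d2) = 0 := by rw [map_sub, heq, sub_self]
  have hz2 := congrFun hz t
  simpa [φ, mul_sub, Finset.sum_sub_distrib, sub_eq_zero] using hz2

end Aux

/-- Let `|𝒯| < |𝒴|` and `|𝒳| ≥ 2`, and suppose `min_{Q ∈ Δ_P} I_Q(T:X|Y) = 0`.
If there is a maximizer of `H_Q(T|X,Y)` over `Δ_P` with full support, then the
maximizer is not unique. -/
theorem nonuniqueness_cardinalities_CI [Fintype T] [Fintype X] [Fintype Y]
    (hcard : Fintype.card T < Fintype.card Y) (hX : 2 ≤ Fintype.card X)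
    (P Qs : T → X → Y → ℝ) (hP : IsDist P)
    (hUI : IsLeast {v : ℝ | ∃ Q ∈ deltaP P, CMI Q = v} 0)
    (hQs : Qs ∈ deltaP P) (hmax : ∀ Q ∈ deltaP P, condEntTXY Q ≤ condEntTXY Qs)
    (hfull : ∀ t x y, 0 < Qs t x y) :
    ∃ Q' ∈ deltaP P, Q' ≠ Qs ∧ ∀ Q ∈ deltaP P, condEntTXY Q ≤ condEntTXY Q' := by
  classical
  obtain ⟨hQsDist, hQsTX, hQsTY⟩ := hQs
  have h0 : ∀ t x y, 0 ≤ Qs t x y := fun t x y => (hfull t x y).le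
  -- nonemptiness
  have hTne : Nonempty T := by
    by_contra h
    rw [not_nonempty_iff] at h
    exact absurd hP.2 (by simp)
  have hXne : Nonempty X := Fintype.card_pos_iff.mp (by omega)
  have hYne : Nonempty Y := Fintype.card_pos_iff.mp (by omega)
  -- positivity of marginals of Qs
  have hapos : ∀ t y, 0 < margTY Qs t y := fun t y =>
    Finset.sum_pos (fun x _ => hfull t x y) Finset.univ_nonempty
  have hbpos : ∀ x y, 0 < margXY Qs x y := fun x y =>
    Finset.sum_pos (fun t _ => hfull t x y) Finset.univ_nonempty
  have hmpos : ∀ y, 0 < margY Qs y := fun y => by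
    rw [margY_eq_sum_margTY]
    exact Finset.sum_pos (fun t _ => hapos t y) Finset.univ_nonempty
  -- condEnt + CMI is constant on deltaP
  have hKey : ∀ Q ∈ deltaP P, condEntTXY Q + CMI Q = condEntTXY Qs + CMI Qs := by
    intro Q hQ
    obtain ⟨hQd, hQtx, hQty⟩ := hQ
    rw [condEnt_add_CMI Q hQd.1, condEnt_add_CMI Qs h0]
    refine Finset.sum_congr rfl fun t _ => Finset.sum_congr rfl fun y _ => ?_
    have hYeq : margY Q y = margY Qs y := by
      rw [margY_eq_sum_margTY, margY_eq_sum_margTY]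
      exact Finset.sum_congr rfl fun t' _ => (hQty t' y).trans (hQsTY t' y).symm
    rw [hQty, hQsTY, hYeq]
  -- CMI Qs = 0
  have hCMIQs : CMI Qs = 0 := by
    obtain ⟨⟨Q0, hQ0mem, hQ0cmi⟩, hlb⟩ := hUI
    have h1 : 0 ≤ CMI Qs := hlb ⟨Qs, ⟨hQsDist, hQsTX, hQsTY⟩, rfl⟩
    have h2 := hKey Q0 hQ0mem
    have h3 := hmax Q0 hQ0mem
    linarith
  -- factorization of Qs
  have hfact : ∀ t x y, Qs t x y * margY Qs y = margTY Qs t y * margXY Qs x y := by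
    set r : T × X × Y → ℝ := fun p =>
      margTY Qs p.1 p.2.2 * margXY Qs p.2.1 p.2.2 / (Qs p.1 p.2.1 p.2.2 * margY Qs p.2.2)
      with hr
    set q : T × X × Y → ℝ := fun p => Qs p.1 p.2.1 p.2.2 with hqdef
    have hrpos : ∀ p, 0 < r p := fun p =>
      div_pos (mul_pos (hapos _ _) (hbpos _ _)) (mul_pos (hfull _ _ _) (hmpos _))
    have hqpos : ∀ p, 0 < q p := fun p => hfull _ _ _
    have hsum_q : ∑ p : T × X × Y, q p = 1 := by
      rw [Fintype.sum_prod_type]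
      simpa [Fintype.sum_prod_type] using hQsDist.2
    have hsum_qr : ∑ p : T × X × Y, q p * r p = 1 := by
      have hterm : ∀ p : T × X × Y, q p * r p =
          margTY Qs p.1 p.2.2 * margXY Qs p.2.1 p.2.2 / margY Qs p.2.2 := by
        intro p
        rw [hr, hqdef]
        have h1 := (hfull p.1 p.2.1 p.2.2).ne'
        have h2 := (hmpos p.2.2).ne'
        field_simp
      rw [Fintype.sum_congr _ _ hterm]
      rw [Fintype.sum_prod_type]
      rw [show (∑ t, ∑ p : X × Y, margTY Qs t p.2 * margXY Qs p.1 p.2 / margY Qs p.2)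
          = ∑ t, ∑ x, ∑ y, margTY Qs t y * margXY Qs x y / margY Qs y from
        Finset.sum_congr rfl fun t _ => Fintype.sum_prod_type _]
      have : ∀ y, ∑ t, ∑ x, margTY Qs t y * margXY Qs x y / margY Qs y = margY Qs y := by
        intro y
        have : ∑ t, ∑ x, margTY Qs t y * margXY Qs x y / margY Qs y
            = (∑ t, margTY Qs t y) * (∑ x, margXY Qs x y) / margY Qs y := by
          rw [Finset.sum_mul, Finset.sum_div]
          refine Finset.sum_congr rfl fun t _ => ?_
          rw [Finset.mul_sum, Finset.sum_div]
        rw [this, ← margY_eq_sum_margTY, ← margY_eq_sum_margXY,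
          mul_div_assoc, div_self (hmpos y).ne', mul_one]
      calc ∑ t, ∑ x, ∑ y, margTY Qs t y * margXY Qs x y / margY Qs y
          = ∑ t, ∑ y, ∑ x, margTY Qs t y * margXY Qs x y / margY Qs y :=
            Finset.sum_congr rfl fun t _ => Finset.sum_comm
        _ = ∑ y, ∑ t, ∑ x, margTY Qs t y * margXY Qs x y / margY Qs y := Finset.sum_comm
        _ = ∑ y, margY Qs y := Finset.sum_congr rfl fun y _ => this y
        _ = 1 := sum_margY Qs hQsDist.2
    -- CMI Qs as a sum of q * log r
    have hlogsum : ∑ p : T × X × Y, q p * Real.log (r p) = 0 := by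
      have hterm : ∀ p : T × X × Y, q p * Real.log (r p) =
          -(Qs p.1 p.2.1 p.2.2 * Real.log (Qs p.1 p.2.1 p.2.2 * margY Qs p.2.2 /
            (margTY Qs p.1 p.2.2 * margXY Qs p.2.1 p.2.2))) := by
        intro p
        rw [hqdef, hr]
        rw [show Qs p.1 p.2.1 p.2.2 * margY Qs p.2.2 /
            (margTY Qs p.1 p.2.2 * margXY Qs p.2.1 p.2.2)
          = (margTY Qs p.1 p.2.2 * margXY Qs p.2.1 p.2.2 /
            (Qs p.1 p.2.1 p.2.2 * margY Qs p.2.2))⁻¹ from by rw [inv_div]]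
        rw [Real.log_inv]
        ring
      rw [Fintype.sum_congr _ _ hterm, Finset.sum_neg_distrib]
      rw [show (∑ p : T × X × Y, Qs p.1 p.2.1 p.2.2 * Real.log (Qs p.1 p.2.1 p.2.2 *
          margY Qs p.2.2 / (margTY Qs p.1 p.2.2 * margXY Qs p.2.1 p.2.2))) = CMI Qs from by
        rw [CMI, Fintype.sum_prod_type]
        exact Finset.sum_congr rfl fun t _ => Fintype.sum_prod_type _]
      rw [hCMIQs, neg_zero]
    -- equality case
    have hr1 : ∀ p : T × X × Y, r p = 1 := by
      by_contra hcon
      push_neg at hcon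
      obtain ⟨p0, hp0⟩ := hcon
      have hlt : ∑ p : T × X × Y, q p * Real.log (r p)
          < ∑ p : T × X × Y, q p * (r p - 1) := by
        refine Finset.sum_lt_sum (fun p _ => ?_) ⟨p0, Finset.mem_univ p0, ?_⟩
        · exact mul_le_mul_of_nonneg_left
            (Real.log_le_sub_one_of_pos (hrpos p)) (hqpos p).le
        · exact mul_lt_mul_of_pos_left
            (Real.log_lt_sub_one_of_pos (hrpos p0) hp0) (hqpos p0)
      rw [hlogsum] at hlt
      have : ∑ p : T × X × Y, q p * (r p - 1)
          = (∑ p : T × X × Y, q p * r p) - ∑ p : T × X × Y, q p := by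
        rw [← Finset.sum_sub_distrib]
        exact Finset.sum_congr rfl fun p _ => by ring
      rw [this, hsum_qr, hsum_q, sub_self] at hlt
      exact lt_irrefl 0 hlt
    intro t x y
    have := hr1 (t, x, y)
    rw [hr] at this
    exact ((div_eq_one_iff_eq (mul_pos (hfull t x y) (hmpos y)).ne').mp this).symm
  -- perturbation direction
  obtain ⟨d, hd0, hdker⟩ := exists_kernel_vec hcard (fun t y => margTY Qs t y / margY Qs y)
  obtain ⟨x0, x1, hx01⟩ := Fintype.exists_pair_of_one_lt_card
    (show 1 < Fintype.card X by omega)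
  set c : X → Y → ℝ := fun x y => if x = x0 then d y else if x = x1 then - d y else 0
    with hc
  have hcsplit : ∀ x y, c x y
      = (if x = x0 then d y else 0) + (if x = x1 then -d y else 0) := by
    intro x y
    by_cases h1 : x = x0
    · subst h1; simp [hc, hx01]
    · by_cases h2 : x = x1 <;> simp [hc, h1, h2, Ne.symm hx01]
  have hcsum : ∀ y, ∑ x, c x y = 0 := by
    intro y
    rw [Finset.sum_congr rfl fun x _ => hcsplit x y, Finset.sum_add_distrib]
    simp [Finset.sum_ite_eq']
  have hcker : ∀ t x, ∑ y, margTY Qs t y / margY Qs y * c x y = 0 := by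
    intro t x
    by_cases h1 : x = x0
    · subst h1
      simpa [hc] using hdker t
    · by_cases h2 : x = x1
      · have heq : ∀ y, margTY Qs t y / margY Qs y * c x y
            = -(margTY Qs t y / margY Qs y * d y) := by
          intro y; simp [hc, h1, h2, Ne.symm hx01]
        rw [Finset.sum_congr rfl fun y _ => heq y, Finset.sum_neg_distrib]
        rw [show (∑ y, margTY Qs t y / margY Qs y * d y) = 0 from hdker t, neg_zero]
      · simp [hc, h1, h2]
  set pert : T → X → Y → ℝ := fun t x y => margTY Qs t y / margY Qs y * c x y with hpert
  have hpertTX : ∀ t x, ∑ y, pert t x y = 0 := fun t x => hcker t x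
  have hpertTY : ∀ t y, ∑ x, pert t x y = 0 := by
    intro t y
    rw [show (∑ x, pert t x y) = margTY Qs t y / margY Qs y * ∑ x, c x y from by
      rw [Finset.mul_sum]]
    rw [hcsum y, mul_zero]
  haveI hPne : Nonempty (T × X × Y) := by infer_instance
  set M : ℝ := Finset.univ.sup' Finset.univ_nonempty
    (fun p : T × X × Y => |pert p.1 p.2.1 p.2.2|) with hMdef
  set δ : ℝ := Finset.univ.inf' Finset.univ_nonempty
    (fun p : T × X × Y => Qs p.1 p.2.1 p.2.2) with hδdef
  have hδpos : 0 < δ := by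
    rw [hδdef, Finset.lt_inf'_iff]
    exact fun p _ => hfull _ _ _
  have hM0 : 0 ≤ M := by
    obtain ⟨p⟩ := hPne
    rw [hMdef]
    exact le_trans (abs_nonneg (pert p.1 p.2.1 p.2.2))
      (Finset.le_sup' (fun p : T × X × Y => |pert p.1 p.2.1 p.2.2|) (Finset.mem_univ p))
  set ε : ℝ := δ / (M + 1) with hεdef
  have hεpos : 0 < ε := div_pos hδpos (by linarith)
  have hεM : ε * M + ε = δ := by
    rw [hεdef]
    field_simp
  set Q' : T → X → Y → ℝ := fun t x y => Qs t x y + ε * pert t x y with hQ'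
  have hQ'eq : ∀ t x y, Q' t x y = Qs t x y + ε * pert t x y := fun t x y => by
    rw [hQ']
  have hQ'pos : ∀ t x y, 0 < Q' t x y := by
    intro t x y
    have h1 : δ ≤ Qs t x y := by
      rw [hδdef]; exact Finset.inf'_le _ (Finset.mem_univ (t, x, y))
    have h2 : |pert t x y| ≤ M := by
      rw [hMdef]
      exact Finset.le_sup' (fun p : T × X × Y => |pert p.1 p.2.1 p.2.2|)
        (Finset.mem_univ (t, x, y))
    have h3 : -(ε * M) ≤ ε * pert t x y := by
      have h4 := neg_abs_le (pert t x y)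
      nlinarith
    rw [hQ'eq]
    linarith
  -- marginals of Q'
  have hQ'TX : ∀ t x, margTX Q' t x = margTX P t x := by
    intro t x
    calc margTX Q' t x = ∑ y, (Qs t x y + ε * pert t x y) :=
          Finset.sum_congr rfl fun y _ => hQ'eq t x y
      _ = (∑ y, Qs t x y) + ε * ∑ y, pert t x y := by
          rw [Finset.mul_sum, Finset.sum_add_distrib]
      _ = margTX P t x := by rw [hpertTX, mul_zero, add_zero, ← margTX, hQsTX]
  have hQ'TYQs : ∀ t y, margTY Q' t y = margTY Qs t y := by
    intro t y
    calc margTY Q' t y = ∑ x, (Qs t x y + ε * pert t x y) :=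
          Finset.sum_congr rfl fun x _ => hQ'eq t x y
      _ = (∑ x, Qs t x y) + ε * ∑ x, pert t x y := by
          rw [Finset.mul_sum, Finset.sum_add_distrib]
      _ = margTY Qs t y := by rw [hpertTY, mul_zero, add_zero, margTY]
  have hQ'TY : ∀ t y, margTY Q' t y = margTY P t y := fun t y =>
    (hQ'TYQs t y).trans (hQsTY t y)
  have hQ'sum : ∑ t, ∑ x, ∑ y, Q' t x y = 1 := by
    calc ∑ t, ∑ x, ∑ y, Q' t x y = ∑ t, ∑ x, margTX P t x :=
          Finset.sum_congr rfl fun t _ => Finset.sum_congr rfl fun x _ => hQ'TX t x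
      _ = 1 := hP.2
  have hQ'mem : Q' ∈ deltaP P := ⟨⟨fun t x y => (hQ'pos t x y).le, hQ'sum⟩, hQ'TX, hQ'TY⟩
  -- margXY and margY of Q'
  have hQ'XY : ∀ x y, margXY Q' x y = margXY Qs x y + ε * c x y := by
    intro x y
    have h1 : ∑ t, margTY Qs t y / margY Qs y = 1 := by
      rw [← Finset.sum_div, ← margY_eq_sum_margTY, div_self (hmpos y).ne']
    calc margXY Q' x y = ∑ t, (Qs t x y + ε * (margTY Qs t y / margY Qs y * c x y)) :=
          Finset.sum_congr rfl fun t _ => hQ'eq t x y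
      _ = (∑ t, Qs t x y) + ∑ t, ε * (margTY Qs t y / margY Qs y * c x y) :=
          Finset.sum_add_distrib
      _ = margXY Qs x y + ε * ((∑ t, margTY Qs t y / margY Qs y) * c x y) := by
          rw [margXY, Finset.sum_mul, Finset.mul_sum]
      _ = margXY Qs x y + ε * c x y := by rw [h1, one_mul]
  have hQ'Y : ∀ y, margY Q' y = margY Qs y := by
    intro y
    rw [margY_eq_sum_margTY, margY_eq_sum_margTY]
    exact Finset.sum_congr rfl fun t _ => hQ'TYQs t y
  -- CMI Q' = 0
  have hQ'CMI : CMI Q' = 0 := by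
    rw [CMI]
    refine Finset.sum_eq_zero fun t _ => Finset.sum_eq_zero fun x _ =>
      Finset.sum_eq_zero fun y _ => ?_
    have hb' : 0 < margXY Q' x y :=
      Finset.sum_pos (fun t' _ => hQ'pos t' x y) Finset.univ_nonempty
    have ha' : 0 < margTY Q' t y := by rw [hQ'TYQs]; exact hapos t y
    have hAeq : Q' t x y * margY Q' y = margTY Q' t y * margXY Q' x y := by
      rw [hQ'Y, hQ'XY, hQ'TYQs, hQ'eq]
      have hm := (hmpos y).ne'
      have hf := hfact t x y
      show (Qs t x y + ε * (margTY Qs t y / margY Qs y * c x y)) * margY Qs y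
          = margTY Qs t y * (margXY Qs x y + ε * c x y)
      field_simp
      linear_combination hf
    rw [hAeq, div_self (mul_pos ha' hb').ne', Real.log_one, mul_zero]
  -- Q' differs from Qs
  have hne : Q' ≠ Qs := by
    intro h
    obtain ⟨y0, hy0⟩ : ∃ y0, d y0 ≠ 0 := by
      by_contra hco; push_neg at hco; exact hd0 (funext fun y => hco y)
    obtain ⟨t0⟩ := hTne
    have h5 := congrFun (congrFun (congrFun h t0) x0) y0
    rw [hQ'eq] at h5
    have h6 : ε * pert t0 x0 y0 = 0 := by linarith
    have hc0 : pert t0 x0 y0 = margTY Qs t0 y0 / margY Qs y0 * d y0 := by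
      simp [hpert, hc]
    rw [hc0] at h6
    exact (mul_ne_zero hεpos.ne'
      (mul_ne_zero (div_pos (hapos t0 y0) (hmpos y0)).ne' hy0)) h6
  -- conclusion
  have hEnt : condEntTXY Q' = condEntTXY Qs := by
    have h7 := hKey Q' hQ'mem
    rw [hQ'CMI, hCMIQs] at h7
    linarith
  exact ⟨Q', hQ'mem, hne, fun Q hQ => (hmax Q hQ).trans_eq hEnt.symm⟩
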